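/- Fix distinct points z₂, …, z_n in the unit disc with β(z_i, z_j) ≥ η for all i ≠ j, and values δ₂, …, δ_n with |δ_j| ≤ ε. Define recursively δ^1_j = [δ_j, δ₂]/[z_j, z₂], etc. (the triangle of hyperbolic difference quotients with Δ^0_j = δ_j). Then if ε is small enough (depending on η and n), there is a constant C'(η, n) > 0 such that β(Δ^k_i, Δ^k_j) ≤ C'·ε·β(z_i, z_j) for all 0 ≤ k ≤ n−2 and k+2 ≤ i < j ≤ n. -/

import Mathlib

open Complex Set ComplexConjugate

noncomputable section

/-- The open unit disc in ℂ. -/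
def unitDisc : Set ℂ := {z : ℂ | ‖z‖ < 1}

/-- Pseudohyperbolic distance ρ(a,b) = |(a-b)/(1 - conj b · a)|. -/
def pd (a b : ℂ) : ℝ := ‖(a - b) / (1 - conj b * a)‖

/-- Hyperbolic distance β = log((1+ρ)/(1-ρ)). -/
def hd (a b : ℂ) : ℝ := Real.log ((1 + pd a b) / (1 - pd a b))

/-- The complex pseudohyperbolic "bracket" [a,b] = (b-a)/(1 - conj b · a). -/
def hbr (a b : ℂ) : ℂ := (b - a) / (1 - conj b * a)

/-- f is an analytic self-map of the unit disc. -/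
def IsSelfMap (f : ℂ → ℂ) : Prop :=
  DifferentiableOn ℂ f unitDisc ∧ Set.MapsTo f unitDisc unitDisc

/-- Hyperbolic derivative f^h(z) = (1-|z|²) f'(z) / (1-|f z|²). -/
def hypDeriv (f : ℂ → ℂ) (z : ℂ) : ℂ :=
  (1 - (‖z‖ : ℂ) ^ 2) * deriv f z / (1 - (‖f z‖ : ℂ) ^ 2)

/-- The triangle of hyperbolic difference quotients for points indexed 2, …, n:
`Δ^0_j = δ_j` and `Δ^{k+1}_j = [Δ^k_j, Δ^k_{k+2}]/[z_j, z_{k+2}]`. -/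
def hdq2 (z δ : ℕ → ℂ) : ℕ → ℕ → ℂ
  | 0, j => δ j
  | k + 1, j => hbr (hdq2 z δ k j) (hdq2 z δ k (k + 2)) / hbr (z j) (z (k + 2))


lemma pd_nonneg (a b : ℂ) : 0 ≤ pd a b := by
  unfold pd; exact norm_nonneg _

lemma pd_eq_abs_hbr (a b : ℂ) : pd a b = ‖hbr a b‖ := by
  unfold pd hbr
  rw [show a - b = -(b - a) by ring, neg_div, norm_neg]

lemma hbr_abs_le {a b : ℂ} {r : ℝ} (hr0 : 0 ≤ r) (hr : r ≤ 1/2)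
    (ha : ‖a‖ ≤ r) (hb : ‖b‖ ≤ r) :
    ‖hbr a b‖ ≤ 8/3 * r := by
  unfold hbr
  rw [norm_div]
  have h1 : ‖conj b * a‖ ≤ r * r := by
    rw [norm_mul, Complex.norm_conj]
    exact mul_le_mul hb ha (norm_nonneg _) hr0
  have h2 : |‖(1:ℂ)‖ - ‖conj b * a‖| ≤ ‖1 - conj b * a‖ :=
    abs_norm_sub_norm_le _ _
  rw [norm_one] at h2
  have hden : 3/4 ≤ ‖1 - conj b * a‖ := by
    rw [abs_le] at h2; nlinarith [h2.1]
  have hnum : ‖b - a‖ ≤ 2 * r := by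
    calc ‖b - a‖ ≤ ‖b‖ + ‖a‖ := by
          rw [sub_eq_add_neg]
          calc ‖b + -a‖ ≤ ‖b‖ + ‖-a‖ :=
                norm_add_le _ _
          _ = ‖b‖ + ‖a‖ := by rw [norm_neg]
    _ ≤ 2 * r := by linarith
  calc ‖b - a‖ / ‖1 - conj b * a‖ ≤ (2*r) / (3/4) :=
        div_le_div₀ (by positivity) hnum (by norm_num) hden
  _ = 8/3 * r := by ring

lemma pd_lower {η : ℝ} (hη : 0 < η) {a b : ℂ} (h : η ≤ hd a b) :
    (Real.exp η - 1) / (Real.exp η + 1) ≤ pd a b := by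
  by_contra hc
  push_neg at hc
  have hp0 : 0 ≤ pd a b := pd_nonneg a b
  set p := pd a b with hp
  have hE1 : 1 < Real.exp η := by
    have := Real.add_one_le_exp η; linarith
  have hs1 : (Real.exp η - 1) / (Real.exp η + 1) < 1 :=
    (div_lt_one (by linarith)).2 (by linarith)
  have hp1 : p < 1 := hc.trans hs1
  have key : (1 + p) / (1 - p) < Real.exp η := by
    rw [div_lt_iff₀ (by linarith)]
    rw [lt_div_iff₀ (by linarith : (0:ℝ) < Real.exp η + 1)] at hc
    nlinarith
  have : hd a b < η := by
    unfold hd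
    calc Real.log ((1 + p) / (1 - p)) < Real.log (Real.exp η) :=
          Real.log_lt_log (div_pos (by linarith) (by linarith)) key
    _ = η := Real.log_exp η
  linarith

lemma hd_le_four_pd {a b : ℂ} (h : pd a b ≤ 1/2) : hd a b ≤ 4 * pd a b := by
  have hp0 : 0 ≤ pd a b := pd_nonneg a b
  unfold hd
  set p := pd a b with hp
  have h1 : (1 + p) / (1 - p) ≤ 1 + 4 * p := by
    rw [div_le_iff₀ (by linarith)]; nlinarith
  have h2 := Real.log_le_sub_one_of_pos
    (show (0:ℝ) < (1 + p) / (1 - p) from div_pos (by linarith) (by linarith))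
  linarith

theorem separated_small_values_compatibility
    (η : ℝ) (hη : 0 < η) (n : ℕ) :
    ∃ ε₀ > 0, ∃ C' > 0, ∀ ε, 0 < ε → ε ≤ ε₀ →
      ∀ z δ : ℕ → ℂ,
        (∀ j, 2 ≤ j → j ≤ n → z j ∈ unitDisc) →
        (∀ i j, 2 ≤ i → i ≤ n → 2 ≤ j → j ≤ n → i ≠ j → η ≤ hd (z i) (z j)) →
        (∀ j, 2 ≤ j → j ≤ n → δ j ∈ unitDisc ∧ ‖δ j‖ ≤ ε) →
        ∀ k i j, k ≤ n - 2 → k + 2 ≤ i → i < j → j ≤ n →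
          hd (hdq2 z δ k i) (hdq2 z δ k j) ≤ C' * ε * hd (z i) (z j) := by
  have hE1 : 1 < Real.exp η := by have := Real.add_one_le_exp η; linarith
  set s : ℝ := (Real.exp η - 1) / (Real.exp η + 1) with hsdef
  have hs : 0 < s := div_pos (by linarith) (by linarith)
  have hs1 : s < 1 := (div_lt_one (by linarith)).2 (by linarith)
  set M : ℝ := (8 / (3 * s)) ^ n with hMdef
  have hbase : 1 ≤ 8 / (3 * s) := by
    rw [le_div_iff₀ (by linarith)]; linarith
  have hM : 1 ≤ M := by simpa using pow_le_pow_right₀ hbase (Nat.zero_le n)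
  have hM0 : 0 < M := by linarith
  refine ⟨3 / (16 * M), by positivity, 32 * M / (3 * η), by positivity, ?_⟩
  intro ε hε hε0 z δ hz hsep hδ
  have hMε : M * ε ≤ 3 / 16 := by
    rw [le_div_iff₀ (by positivity)] at hε0
    nlinarith
  have key : ∀ k j, k + 2 ≤ j → j ≤ n →
      ‖hdq2 z δ k j‖ ≤ (8 / (3 * s)) ^ k * ε := by
    intro k
    induction k with
    | zero =>
      intro j hj hjn
      simpa [hdq2] using (hδ j hj hjn).2
    | succ k ih =>
      intro j hj hjn
      have hk2n : k + 2 ≤ n := by omega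
      have hkn : k ≤ n := by omega
      have hpow : (8 / (3 * s)) ^ k ≤ M := pow_le_pow_right₀ hbase hkn
      have hrpos : 0 ≤ (8 / (3 * s)) ^ k * ε := by positivity
      have hr : (8 / (3 * s)) ^ k * ε ≤ 1/2 := by
        have : (8 / (3 * s)) ^ k * ε ≤ M * ε :=
          mul_le_mul_of_nonneg_right hpow hε.le
        linarith
      have h1 := ih j (by omega) hjn
      have h2 := ih (k + 2) le_rfl hk2n
      have hnum := hbr_abs_le hrpos hr h1 h2
      have hden : s ≤ ‖hbr (z j) (z (k + 2))‖ := by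
        rw [← pd_eq_abs_hbr]
        exact pd_lower hη (hsep j (k + 2) (by omega) hjn (by omega) hk2n (by omega))
      show ‖hbr (hdq2 z δ k j) (hdq2 z δ k (k + 2)) / hbr (z j) (z (k + 2))‖ ≤ _
      rw [norm_div]
      calc ‖hbr (hdq2 z δ k j) (hdq2 z δ k (k + 2))‖ /
            ‖hbr (z j) (z (k + 2))‖
          ≤ (8/3 * ((8 / (3 * s)) ^ k * ε)) / s :=
            div_le_div₀ (by positivity) hnum hs hden
        _ = (8 / (3 * s)) ^ (k + 1) * ε := by
            rw [pow_succ]; field_simp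
  intro k i j hk hi hij hjn
  have hin : i ≤ n := by omega
  have hkn : k ≤ n := by omega
  have hbi := key k i hi hin
  have hbj := key k j (by omega) hjn
  have hpow : (8 / (3 * s)) ^ k ≤ M := pow_le_pow_right₀ hbase hkn
  have hrε : (8 / (3 * s)) ^ k * ε ≤ M * ε :=
    mul_le_mul_of_nonneg_right hpow hε.le
  have hrpos : 0 ≤ (8 / (3 * s)) ^ k * ε := by positivity
  have hr : (8 / (3 * s)) ^ k * ε ≤ 1/2 := by linarith
  have hp : pd (hdq2 z δ k i) (hdq2 z δ k j) ≤ 8/3 * ((8 / (3 * s)) ^ k * ε) := by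
    rw [pd_eq_abs_hbr]
    exact hbr_abs_le hrpos hr hbi hbj
  have hp2 : pd (hdq2 z δ k i) (hdq2 z δ k j) ≤ 1/2 := by linarith
  have hhd := hd_le_four_pd hp2
  have hzij : η ≤ hd (z i) (z j) := hsep i j (by omega) hin (by omega) hjn (by omega)
  have hC : 32 * M / (3 * η) * ε * hd (z i) (z j) ≥ 32 * M / (3 * η) * ε * η := by
    have : 0 ≤ 32 * M / (3 * η) * ε := by positivity
    exact mul_le_mul_of_nonneg_left hzij this
  have heq : 32 * M / (3 * η) * ε * η = 32/3 * (M * ε) := by field_simp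
  calc hd (hdq2 z δ k i) (hdq2 z δ k j) ≤ 4 * pd (hdq2 z δ k i) (hdq2 z δ k j) := hhd
    _ ≤ 4 * (8/3 * ((8 / (3 * s)) ^ k * ε)) := by linarith
    _ ≤ 32/3 * (M * ε) := by linarith
    _ = 32 * M / (3 * η) * ε * η := heq.symm
    _ ≤ 32 * M / (3 * η) * ε * hd (z i) (z j) := hC
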